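/- The center of the Goldman Lie algebra of the torus over ℚ is exactly the ℚ-span of e_{(0,0)}: an element x satisfies [x,y] = 0 for all y if and only if x is a scalar multiple of e_{(0,0)}. -/
import Mathlib


noncomputable def gb (x y : (ℤ × ℤ) →₀ ℚ) : (ℤ × ℤ) →₀ ℚ :=
  x.sum fun p a => y.sum fun q b =>
    Finsupp.single (p.1 + q.1, p.2 + q.2) (a * b * ((p.1 * q.2 - p.2 * q.1 : ℤ) : ℚ))

noncomputable def e (p : ℤ × ℤ) : (ℤ × ℤ) →₀ ℚ := Finsupp.single p 1

lemma gb_e (x : (ℤ × ℤ) →₀ ℚ) (q : ℤ × ℤ) :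
    gb x (e q) = x.sum fun p a =>
      Finsupp.single (p.1 + q.1, p.2 + q.2) (a * ((p.1 * q.2 - p.2 * q.1 : ℤ) : ℚ)) := by
  unfold gb e
  apply Finsupp.sum_congr
  intro p _
  rw [Finsupp.sum_single_index] <;> simp

lemma gb_e_apply (x : (ℤ × ℤ) →₀ ℚ) (q p0 : ℤ × ℤ) :
    gb x (e q) (p0.1 + q.1, p0.2 + q.2) = x p0 * ((p0.1 * q.2 - p0.2 * q.1 : ℤ) : ℚ) := by
  classical
  rw [gb_e, Finsupp.sum_apply]
  have : ∀ p : ℤ × ℤ, ∀ a : ℚ,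
      (Finsupp.single (p.1 + q.1, p.2 + q.2) (a * ((p.1 * q.2 - p.2 * q.1 : ℤ) : ℚ)) :
        (ℤ × ℤ) →₀ ℚ) (p0.1 + q.1, p0.2 + q.2)
      = if p = p0 then a * ((p.1 * q.2 - p.2 * q.1 : ℤ) : ℚ) else 0 := by
    intro p a
    rw [Finsupp.single_apply]
    congr 1
    simp [Prod.ext_iff]
  simp only [Finsupp.sum]
  rw [Finset.sum_congr rfl (fun p _ => this p (x p)), Finset.sum_ite_eq' x.support p0]
  split_ifs with h
  · rfl
  · rw [Finsupp.notMem_support_iff.mp h, zero_mul]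

theorem goldman_center (x : (ℤ × ℤ) →₀ ℚ) :
    (∀ y, gb x y = 0) ↔ ∃ c : ℚ, x = c • e (0, 0) := by
  constructor
  · intro h
    refine ⟨x (0, 0), ?_⟩
    ext p
    have h1 := gb_e_apply x (0, 1) p
    have h2 := gb_e_apply x (1, 0) p
    rw [h (e (0, 1))] at h1
    rw [h (e (1, 0))] at h2
    simp at h1 h2
    by_cases hp : p = (0, 0)
    · subst hp; simp [e]
    · have : x p = 0 := by
        rcases h1 with h1 | h1
        · exact h1
        rcases h2 with h2 | h2
        · exact h2
        · exact absurd (Prod.ext (by exact_mod_cast h1) (by exact_mod_cast h2)) hp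
      rw [this]
      simp only [Finsupp.smul_apply, e, Finsupp.single_apply]
      rw [if_neg (by exact fun he => hp he.symm)]
      simp
  · rintro ⟨c, rfl⟩ y
    unfold gb e
    rw [Finsupp.smul_single, Finsupp.sum_single_index] <;> simp
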